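/- For each positive integer n, the algebra A_n of 2×2 complex matrices of the form [[a, n(a−b)],[0,b]] has hyperreflexivity constant κ_{A_n} ≥ (n²+1)/(2n), as witnessed by the matrix T = [[1,0],[0,−1]]. -/

import Mathlib

/-- A matrix acting as an operator on Euclidean space (so `‖act M‖` is the
operator/spectral norm). -/
noncomputable def act {n : ℕ} (M : Matrix (Fin n) (Fin n) ℂ) :
    EuclideanSpace ℂ (Fin n) →L[ℂ] EuclideanSpace ℂ (Fin n) :=
  LinearMap.toContinuousLinearMap (Matrix.toEuclideanLin M)

/-- Distance from `T` to a subspace of matrices, in the operator norm. -/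
noncomputable def mOpDist {n : ℕ} (T : Matrix (Fin n) (Fin n) ℂ)
    (S : Submodule ℂ (Matrix (Fin n) (Fin n) ℂ)) : ℝ :=
  Metric.infDist (act T) ((fun A => act A) '' (S : Set (Matrix (Fin n) (Fin n) ℂ)))

/-- `β_S(T) = sup_{‖x‖=1} dist(Tx, Sx)`. -/
noncomputable def mBeta {n : ℕ} (S : Submodule ℂ (Matrix (Fin n) (Fin n) ℂ))
    (T : Matrix (Fin n) (Fin n) ℂ) : ℝ :=
  ⨆ x : {x : EuclideanSpace ℂ (Fin n) // ‖x‖ = 1},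
    Metric.infDist (act T x.1) ((fun A => act A x.1) '' (S : Set (Matrix (Fin n) (Fin n) ℂ)))

/-- The algebra `A_n` of matrices `[[a, n(a-b)], [0, b]]`. -/
noncomputable def An (n : ℕ) : Submodule ℂ (Matrix (Fin 2) (Fin 2) ℂ) where
  carrier := {M | M 1 0 = 0 ∧ M 0 1 = (n : ℂ) * (M 0 0 - M 1 1)}
  add_mem' := by
    rintro M N ⟨h1, h2⟩ ⟨h3, h4⟩
    refine ⟨by simp [h1, h3], ?_⟩
    simp only [Matrix.add_apply, h2, h4]; ring
  zero_mem' := by simp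
  smul_mem' := by
    rintro c M ⟨h1, h2⟩
    refine ⟨by simp [h1], ?_⟩
    simp only [Matrix.smul_apply, h2, smul_eq_mul]; ring

namespace AnProof

noncomputable def vec2 (u v : ℂ) : EuclideanSpace ℂ (Fin 2) :=
  (WithLp.equiv 2 (Fin 2 → ℂ)).symm ![u, v]

lemma vec2_zero (u v : ℂ) : vec2 u v 0 = u := rfl
lemma vec2_one (u v : ℂ) : vec2 u v 1 = v := rfl

lemma act_apply (M : Matrix (Fin 2) (Fin 2) ℂ) (x : EuclideanSpace ℂ (Fin 2)) (i : Fin 2) :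
    act M x i = M i 0 * x 0 + M i 1 * x 1 := by
  simp [act, Matrix.toEuclideanLin_apply, Matrix.mulVec, dotProduct, Fin.sum_univ_two]
  fin_cases i <;> simp

lemma act_sub (M N : Matrix (Fin 2) (Fin 2) ℂ) : act (M - N) = act M - act N := by
  ext x i
  simp [act_apply, Matrix.sub_apply]
  ring

lemma norm2 (y : EuclideanSpace ℂ (Fin 2)) :
    ‖y‖ = Real.sqrt (‖y 0‖ ^ 2 + ‖y 1‖ ^ 2) := by
  rw [EuclideanSpace.norm_eq]
  simp [Fin.sum_univ_two]

lemma mem_An (n : ℕ) (M : Matrix (Fin 2) (Fin 2) ℂ) :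
    M ∈ An n ↔ M 1 0 = 0 ∧ M 0 1 = (n : ℂ) * (M 0 0 - M 1 1) := Iff.rfl

lemma norm_ge_one_of_witness (M : Matrix (Fin 2) (Fin 2) ℂ) (u : EuclideanSpace ℂ (Fin 2))
    (hu : u ≠ 0) (h : ‖u‖ ≤ ‖act M u‖) : (1 : ℝ) ≤ ‖act M‖ := by
  have h1 := (act M).le_opNorm u
  have h2 : (0 : ℝ) < ‖u‖ := norm_pos_iff.mpr hu
  nlinarith

lemma dist_ge (n : ℕ) (hn : 1 ≤ n) :
    (1 : ℝ) ≤ mOpDist !![(1 : ℂ), 0; 0, -1] (An n) := by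
  rw [mOpDist]
  have hne : ((fun A => act A) '' ((An n : Set (Matrix (Fin 2) (Fin 2) ℂ)))).Nonempty :=
    ⟨act 0, ⟨0, Submodule.zero_mem _, rfl⟩⟩
  by_contra hlt
  push_neg at hlt
  obtain ⟨y, hy, hd⟩ := (Metric.infDist_lt_iff hne).mp hlt
  obtain ⟨A, hA, rfl⟩ := hy
  obtain ⟨h10, h01⟩ := (mem_An n A).mp hA
  set a : ℂ := A 0 0 with ha
  set b : ℂ := A 1 1 with hb
  set M : Matrix (Fin 2) (Fin 2) ℂ := !![(1 : ℂ), 0; 0, -1] - A with hM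
  have hd' : dist (act !![(1 : ℂ), 0; 0, -1]) (act A) = ‖act M‖ := by
    rw [dist_eq_norm, ← act_sub]
  rw [hd'] at hd
  have m00 : M 0 0 = 1 - a := by simp [hM, Matrix.sub_apply, ha]
  have m01 : M 0 1 = -((n : ℂ) * (a - b)) := by simp [hM, Matrix.sub_apply, h01]
  have m10 : M 1 0 = 0 := by simp [hM, Matrix.sub_apply, h10]
  have m11 : M 1 1 = -1 - b := by simp [hM, Matrix.sub_apply]; try ring
  set p : ℂ := 1 - a with hp
  set q : ℂ := -((n : ℂ) * (a - b)) with hq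
  set r : ℂ := -1 - b with hr
  have habs : ¬ (1 : ℝ) ≤ ‖act M‖ := not_le.mpr hd
  apply habs; clear habs hd hlt hd' hA h01 h10 hne
  clear_value a b M p q r
  by_cases hP : 1 ≤ ‖p‖
  · apply norm_ge_one_of_witness M (vec2 1 0)
    · intro h
      have h1 : (1 : ℂ) = 0 := congrArg (fun z => z 0) h
      exact one_ne_zero h1
    · rw [norm2, norm2]
      apply Real.sqrt_le_sqrt
      have e0 : act M (vec2 1 0) 0 = p := by
        rw [act_apply, m00, m01, vec2_zero, vec2_one]; ring
      have e1 : act M (vec2 1 0) 1 = 0 := by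
        rw [act_apply, m10, m11, vec2_zero, vec2_one]; ring
      rw [e0, e1, vec2_zero, vec2_one]
      simp only [norm_one, norm_zero]
      nlinarith
  by_cases hR : 1 ≤ ‖r‖
  · apply norm_ge_one_of_witness M (vec2 0 1)
    · intro h
      have h1 : (1 : ℂ) = 0 := congrArg (fun z => z 1) h
      exact one_ne_zero h1
    · rw [norm2, norm2]
      apply Real.sqrt_le_sqrt
      have e0 : act M (vec2 0 1) 0 = q := by
        rw [act_apply, m00, m01, vec2_zero, vec2_one]; ring
      have e1 : act M (vec2 0 1) 1 = r := by
        rw [act_apply, m10, m11, vec2_zero, vec2_one]; ring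
      rw [e0, e1, vec2_zero, vec2_one]
      simp only [norm_one, norm_zero]
      nlinarith [norm_nonneg q]
  push_neg at hP hR
  have hs0 : (0:ℝ) ≤ ‖p‖ := norm_nonneg _
  have ht0 : (0:ℝ) ≤ ‖r‖ := norm_nonneg _
  have hq0 : (0:ℝ) ≤ ‖q‖ := norm_nonneg _
  have hab : (2:ℝ) - ‖p‖ - ‖r‖ ≤ ‖a - b‖ := by
    have h2 : (2:ℂ) = (a - b) + (p - r) := by rw [hp, hr]; try ring
    have h3 : ‖(2:ℂ)‖ ≤ ‖a - b‖ + (‖p‖ + ‖r‖) := by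
      calc ‖(2:ℂ)‖ = ‖(a - b) + (p - r)‖ := by rw [← h2]
        _ ≤ ‖a - b‖ + ‖p - r‖ := norm_add_le _ _
        _ ≤ ‖a - b‖ + (‖p‖ + ‖r‖) := by gcongr; exact norm_sub_le _ _
    have h2n : ‖(2:ℂ)‖ = 2 := by simp
    rw [h2n] at h3; linarith
  have hqn : (n : ℝ) * ‖a - b‖ = ‖q‖ := by
    rw [hq, norm_neg, norm_mul]
    simp
  have hn1 : (1:ℝ) ≤ (n:ℝ) := by exact_mod_cast hn
  have hqge : (2:ℝ) - ‖p‖ - ‖r‖ ≤ ‖q‖ := by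
    have h1 : (0:ℝ) ≤ 2 - ‖p‖ - ‖r‖ := by linarith
    calc (2:ℝ) - ‖p‖ - ‖r‖ ≤ ‖a - b‖ := hab
      _ ≤ (n:ℝ) * ‖a - b‖ := le_mul_of_one_le_left (norm_nonneg _) hn1
      _ = ‖q‖ := hqn
  have hQ2 : (2 - ‖p‖ - ‖r‖)^2 ≤ ‖q‖^2 := by nlinarith
  have h4 : (0:ℝ) ≤ 4 - (1 + ‖p‖) * (1 + ‖r‖) := by nlinarith
  have key : (1 - ‖p‖^2) * (1 - ‖r‖^2) ≤ ‖q‖^2 := by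
    nlinarith [sq_nonneg (‖p‖ - ‖r‖),
      mul_nonneg (mul_nonneg (sub_nonneg.mpr hP.le) (sub_nonneg.mpr hR.le)) h4]
  set P : ℝ := ‖p‖^2 with hPdef
  have hP1 : 0 < 1 - P := by nlinarith
  apply norm_ge_one_of_witness M (vec2 (q * (starRingEnd ℂ) p) ((1 - P : ℝ) : ℂ))
  · intro h
    have h1 : ((1 - P : ℝ) : ℂ) = 0 := congrArg (fun z => z 1) h
    have h2 : (1 - P : ℝ) = 0 := by exact_mod_cast h1
    linarith
  · rw [norm2, norm2]
    apply Real.sqrt_le_sqrt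
    have hpc : p * ((starRingEnd ℂ) p) = ((P:ℝ):ℂ) := by
      rw [RCLike.mul_conj, hPdef]
      push_cast
      try ring
      try rfl
      try norm_cast
    have e0 : act M (vec2 (q * (starRingEnd ℂ) p) ((1 - P : ℝ) : ℂ)) 0 = q := by
      rw [act_apply, m00, m01, vec2_zero, vec2_one]
      have h5 : p * (q * ((starRingEnd ℂ) p)) = ((P:ℝ):ℂ) * q := by
        rw [show p * (q * ((starRingEnd ℂ) p)) = (p * ((starRingEnd ℂ) p)) * q by ring, hpc]
      rw [h5]
      push_cast
      ring
    have e1 : act M (vec2 (q * (starRingEnd ℂ) p) ((1 - P : ℝ) : ℂ)) 1 =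
        ((1 - P : ℝ) : ℂ) * r := by
      rw [act_apply, m10, m11, vec2_zero, vec2_one]
      ring
    rw [e0, e1, vec2_zero, vec2_one]
    have n1 : ‖q * ((starRingEnd ℂ) p)‖ = ‖q‖ * ‖p‖ := by
      rw [norm_mul, RCLike.norm_conj]
    have n2 : ‖((1 - P : ℝ) : ℂ)‖ = 1 - P := by
      rw [Complex.norm_real, Real.norm_eq_abs, abs_of_pos hP1]
    have n3 : ‖((1 - P : ℝ) : ℂ) * r‖ = (1 - P) * ‖r‖ := by
      rw [norm_mul, n2]
    rw [n1, n2, n3]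
    have hRle : ‖r‖^2 ≤ 1 := by nlinarith
    have hmul := mul_le_mul_of_nonneg_left key hP1.le
    rw [mul_pow, mul_pow]
    rw [hPdef] at hmul hP1 ⊢
    nlinarith [hmul]

lemma beta_le (n : ℕ) (hn : 1 ≤ n) :
    mBeta (An n) !![(1 : ℂ), 0; 0, -1] ≤ 2 * n / (n ^ 2 + 1) := by
  have hs : (1:ℝ) ≤ (n:ℝ) := by exact_mod_cast hn
  have hB : (0:ℝ) ≤ 2 * n / (n ^ 2 + 1) := by positivity
  rw [mBeta]
  apply Real.iSup_le _ hB
  rintro ⟨x, hx⟩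
  by_cases h : x 0 + (n:ℂ) * x 1 = 0
  · -- singular case
    set c : ℝ := ((n:ℝ)^2 - 1)/((n:ℝ)^2 + 1) with hc
    set A : Matrix (Fin 2) (Fin 2) ℂ := !![((c:ℝ):ℂ), 0; 0, ((c:ℝ):ℂ)] with hA
    have hmem : A ∈ An n := by
      constructor
      · simp [hA]
      · simp [hA]
    have hle : Metric.infDist (act !![(1 : ℂ), 0; 0, -1] x)
        ((fun A => act A x) '' ((An n : Set (Matrix (Fin 2) (Fin 2) ℂ))))
        ≤ dist (act !![(1 : ℂ), 0; 0, -1] x) (act A x) :=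
      Metric.infDist_le_dist_of_mem ⟨A, hmem, rfl⟩
    refine hle.trans ?_
    rw [dist_eq_norm]
    have d0 : (act !![(1 : ℂ), 0; 0, -1] x - act A x) 0 = (1 - ((c:ℝ):ℂ)) * x 0 := by
      simp [act_apply, hA]
      ring
    have d1 : (act !![(1 : ℂ), 0; 0, -1] x - act A x) 1 = (-1 - ((c:ℝ):ℂ)) * x 1 := by
      simp [act_apply, hA]
      ring
    rw [norm2, d0, d1]
    -- norms
    have hx0 : x 0 = -((n:ℂ) * x 1) := by linear_combination h
    have hnx0 : ‖x 0‖ = (n:ℝ) * ‖x 1‖ := by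
      rw [hx0, norm_neg, norm_mul]
      simp
    have hxnorm : ‖x 0‖^2 + ‖x 1‖^2 = 1 := by
      have h1 : ‖x‖^2 = 1 := by rw [hx]; norm_num
      rw [norm2 x] at h1
      rw [Real.sq_sqrt (by positivity)] at h1
      exact h1
    set w : ℝ := ‖x 1‖ with hw
    have hw2 : ((n:ℝ)^2 + 1) * w^2 = 1 := by
      rw [hnx0] at hxnorm
      nlinarith [hxnorm]
    have hpos : (0:ℝ) < (n:ℝ)^2 + 1 := by positivity
    have hclt : c < 1 := by rw [hc, div_lt_one hpos]; nlinarith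
    have hcge : (0:ℝ) ≤ c := by
      rw [hc]
      exact div_nonneg (by nlinarith) hpos.le
    have hn0 : ‖(1 : ℂ) - ((c:ℝ):ℂ)‖ = 1 - c := by
      rw [show (1 : ℂ) - ((c:ℝ):ℂ) = (((1 - c : ℝ)):ℂ) by push_cast; ring]
      rw [Complex.norm_real, Real.norm_eq_abs, abs_of_pos (by linarith)]
    have hn1 : ‖(-1 : ℂ) - ((c:ℝ):ℂ)‖ = 1 + c := by
      rw [show (-1 : ℂ) - ((c:ℝ):ℂ) = -(((1 + c : ℝ)):ℂ) by push_cast; ring]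
      rw [norm_neg, Complex.norm_real, Real.norm_eq_abs, abs_of_pos (by linarith)]
    rw [norm_mul, norm_mul, hn0, hn1, hnx0, ← hw]
    have hgoal : ((1 - c) * ((n:ℝ) * w))^2 + ((1 + c) * w)^2 = (2 * n / (n^2 + 1))^2 := by
      have hpos : (0:ℝ) < (n:ℝ)^2 + 1 := by positivity
      rw [hc]
      field_simp
      nlinarith [hw2, sq_nonneg w]
    rw [hgoal, Real.sqrt_sq hB]
  · -- generic case: exact match
    set a : ℂ := (x 0 - (n:ℂ) * x 1) / (x 0 + (n:ℂ) * x 1) with ha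
    set A : Matrix (Fin 2) (Fin 2) ℂ := !![a, (n:ℂ)*(a+1); 0, -1] with hA
    have hmem : A ∈ An n := by
      constructor
      · simp [hA]
      · simp [hA]
        try ring
    have hle : Metric.infDist (act !![(1 : ℂ), 0; 0, -1] x)
        ((fun A => act A x) '' ((An n : Set (Matrix (Fin 2) (Fin 2) ℂ))))
        ≤ dist (act !![(1 : ℂ), 0; 0, -1] x) (act A x) :=
      Metric.infDist_le_dist_of_mem ⟨A, hmem, rfl⟩
    refine hle.trans ?_
    have heq : act !![(1 : ℂ), 0; 0, -1] x = act A x := by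
      have hkey : a * (x 0 + (n:ℂ) * x 1) = x 0 - (n:ℂ) * x 1 := by
        rw [ha, div_mul_cancel₀ _ h]
      apply PiLp.ext
      intro i
      fin_cases i
      · simp [act_apply, hA]
        linear_combination -hkey
      · simp [act_apply, hA]
    rw [heq, dist_self]
    exact hB

end AnProof

/-- `κ_{A_n} ≥ (n²+1)/(2n)`, witnessed by `T = diag(1, -1)`:
`dist(T, A_n) ≥ ((n²+1)/(2n)) · β_{A_n}(T)`. -/
theorem An_kappa_ge (n : ℕ) (hn : 1 ≤ n) :
    ((n ^ 2 + 1 : ℝ) / (2 * n)) * mBeta (An n) !![(1 : ℂ), 0; 0, -1]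
      ≤ mOpDist !![(1 : ℂ), 0; 0, -1] (An n) := by
  have hn' : (0 : ℝ) < n := by exact_mod_cast Nat.lt_of_lt_of_le Nat.zero_lt_one hn
  have hc : (0 : ℝ) ≤ (n ^ 2 + 1 : ℝ) / (2 * n) := by positivity
  calc ((n ^ 2 + 1 : ℝ) / (2 * n)) * mBeta (An n) !![(1 : ℂ), 0; 0, -1]
      ≤ ((n ^ 2 + 1 : ℝ) / (2 * n)) * (2 * n / (n ^ 2 + 1)) :=
        mul_le_mul_of_nonneg_left (AnProof.beta_le n hn) hc
    _ = 1 := by field_simp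
    _ ≤ mOpDist !![(1 : ℂ), 0; 0, -1] (An n) := AnProof.dist_ge n hn
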